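/- arXiv:2312.00908 — 2 statements merged into one kernel-verified Lean document; each statement's English description precedes it below -/
import Mathlib

section
/- Let g : ℝ^d → ℝ be a bounded measurable function, V¹ : ℝ^d → ℝ continuous nonnegative with V¹ = 0 exactly on the closure of an open set D, and X = (X_t) a continuous ℝ^d-valued stochastic process with X₀ ∈ D almost surely such that ℙ[τ_D ≥ T] > 0. Then E[g(X_T) | τ_D ≥ T] = lim_{n→∞} E[g(X_T) exp(-n ∫₀ᵀ V¹(X_s) ds)] / E[exp(-n ∫₀ᵀ V¹(X_s) ds)]. -/
open MeasureTheory Filter Set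

/-- For a bounded measurable `g`, a continuous nonnegative potential `V¹`
vanishing exactly on the closure of a bounded open set `D`, and a continuous process `X`
starting in `D` a.s. with `ℙ[τ_D ≥ T] > 0` (where the event `{τ_D ≥ T}` is the event `S`
that the path stays in `closure D` on `[0,T]`), we have
`E[g(X_T) | τ_D ≥ T] = lim_n E[g(X_T) e^{-n ∫₀ᵀ V¹(X_s) ds}] / E[e^{-n ∫₀ᵀ V¹(X_s) ds}]`. -/
theorem stmt_1 (d : ℕ) {Ω : Type*} [MeasurableSpace Ω]
    (ℙ : Measure Ω) [IsProbabilityMeasure ℙ]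
    (D : Set (EuclideanSpace ℝ (Fin d))) (hDopen : IsOpen D)
    (hDbdd : Bornology.IsBounded D)
    (V : EuclideanSpace ℝ (Fin d) → ℝ) (hVcont : Continuous V) (hVnn : ∀ x, 0 ≤ V x)
    (hV0 : ∀ x, V x = 0 ↔ x ∈ closure D)
    (g : EuclideanSpace ℝ (Fin d) → ℝ) (hgm : Measurable g)
    (Cg : ℝ) (hgb : ∀ x, |g x| ≤ Cg)
    (T : ℝ) (hT : 0 < T)
    (X : ℝ → Ω → EuclideanSpace ℝ (Fin d)) (hXmeas : ∀ t, Measurable (X t))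
    (hXcont : ∀ ω, Continuous fun t => X t ω)
    (hX0 : ∀ᵐ ω ∂ℙ, X 0 ω ∈ D)
    (S : Set Ω) (hS : S = {ω | ∀ s ∈ Icc (0:ℝ) T, X s ω ∈ closure D})
    (hSpos : 0 < ℙ S) :
    Tendsto (fun n : ℕ =>
        (∫ ω, g (X T ω) * Real.exp (-(n : ℝ) * ∫ s in (0:ℝ)..T, V (X s ω)) ∂ℙ) /
          (∫ ω, Real.exp (-(n : ℝ) * ∫ s in (0:ℝ)..T, V (X s ω)) ∂ℙ))
      atTop
      (nhds ((∫ ω in S, g (X T ω) ∂ℙ) / (ℙ S).toReal)) := by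
  -- Abbreviate the time integral
  set I : Ω → ℝ := fun ω => ∫ s in Set.Ioc (0:ℝ) T, V (X s ω) with hIdef
  have hIeq : ∀ ω, (∫ s in (0:ℝ)..T, V (X s ω)) = I ω := fun ω =>
    intervalIntegral.integral_of_le hT.le
  have hVX_cont : ∀ ω, Continuous fun s => V (X s ω) := fun ω => hVcont.comp (hXcont ω)
  -- Measurability of I
  have hunc : Measurable (Function.uncurry X) :=
    measurable_uncurry_of_continuous_of_measurable hXcont hXmeas
  have hF : Measurable fun p : Ω × ℝ => V (X p.2 p.1) :=
    hVcont.measurable.comp (hunc.comp measurable_swap)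
  have hImeas : Measurable I := by
    have h := hF.stronglyMeasurable.integral_prod_right'
        (ν := (volume : Measure ℝ).restrict (Set.Ioc (0:ℝ) T))
    exact h.measurable
  have hInn : ∀ ω, 0 ≤ I ω := fun ω =>
    setIntegral_nonneg measurableSet_Ioc (fun s _ => hVnn _)
  -- I vanishes on S
  have hIzero : ∀ ω ∈ S, I ω = 0 := by
    intro ω hω
    rw [hS] at hω
    have h0 : ∀ s ∈ Set.Ioc (0:ℝ) T, V (X s ω) = 0 := fun s hs =>
      (hV0 _).mpr (hω s ⟨hs.1.le, hs.2⟩)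
    calc I ω = ∫ s in Set.Ioc (0:ℝ) T, (0:ℝ) :=
          setIntegral_congr_fun measurableSet_Ioc h0
      _ = 0 := integral_zero _ _
  -- I is positive off S
  have hIpos : ∀ ω, ω ∉ S → 0 < I ω := by
    intro ω hω
    rw [hS] at hω
    simp only [Set.mem_setOf_eq, not_forall] at hω
    obtain ⟨s₀, hs₀, hout⟩ := hω
    have hc : 0 < V (X s₀ ω) :=
      lt_of_le_of_ne (hVnn _) (fun h => hout ((hV0 _).mp h.symm))
    set c := V (X s₀ ω) with hcdef
    obtain ⟨δ, hδ, hδ2⟩ := Metric.continuous_iff.mp (hVX_cont ω) s₀ (c/2) (half_pos hc)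
    have hlb : ∀ x, dist x s₀ < δ → c/2 ≤ V (X x ω) := by
      intro x hx
      have h1 := hδ2 x hx
      rw [Real.dist_eq] at h1
      have h2 := abs_lt.mp h1
      linarith [h2.1]
    set a := max 0 (s₀ - δ/2) with hadef
    set b := min T (s₀ + δ/2) with hbdef
    have hab : a < b := by
      apply lt_min (max_lt hT (by linarith [hs₀.2]))
        (max_lt (by linarith [hs₀.1]) (by linarith))
    have hsub : Set.Ioc a b ⊆ Set.Ioc 0 T :=
      Set.Ioc_subset_Ioc (le_max_left _ _) (min_le_left _ _)
    have hball : ∀ x ∈ Set.Ioc a b, dist x s₀ < δ := by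
      intro x hx
      rw [Real.dist_eq, abs_lt]
      constructor
      · have := hx.1
        have ha2 : s₀ - δ/2 ≤ a := le_max_right _ _
        linarith
      · have := hx.2
        have hb2 : b ≤ s₀ + δ/2 := min_le_right _ _
        linarith
    have hint : IntegrableOn (fun s => V (X s ω)) (Set.Ioc 0 T) volume :=
      (hVX_cont ω).integrableOn_Ioc
    have h1 : c/2 * (volume (Set.Ioc a b)).toReal ≤ ∫ x in Set.Ioc a b, V (X x ω) :=
      setIntegral_ge_of_const_le_real measurableSet_Ioc (by simp [Real.volume_Ioc])
        (fun x hx => hlb x (hball x hx)) (hint.mono_set hsub)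
    have h2 : (∫ x in Set.Ioc a b, V (X x ω)) ≤ I ω :=
      setIntegral_mono_set hint (Filter.Eventually.of_forall (fun s => hVnn _))
        (HasSubset.Subset.eventuallyLE hsub)
    have hvol : (volume (Set.Ioc a b)).toReal = b - a := by
      rw [Real.volume_Ioc, ENNReal.toReal_ofReal (by linarith)]
    have hpos : 0 < c/2 * (volume (Set.Ioc a b)).toReal := by
      rw [hvol]; exact mul_pos (half_pos hc) (by linarith)
    linarith
  -- S is measurable
  have hSI : S = I ⁻¹' {0} := by
    ext ω
    simp only [Set.mem_preimage, Set.mem_singleton_iff]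
    constructor
    · exact fun h => hIzero ω h
    · intro h
      by_contra hns
      exact (hIpos ω hns).ne' h
  have hSmeas : MeasurableSet S := hSI ▸ hImeas (measurableSet_singleton 0)
  -- pointwise limit of the exponential weights
  have hpt : ∀ ω, Tendsto (fun n : ℕ => Real.exp (-(n:ℝ) * I ω)) atTop
      (nhds (S.indicator (fun _ => (1:ℝ)) ω)) := by
    intro ω
    by_cases hω : ω ∈ S
    · simp [Set.indicator_of_mem hω, hIzero ω hω]
    · rw [Set.indicator_of_notMem hω]
      have hpos := hIpos ω hω
      have h1 : Tendsto (fun n : ℕ => -((n:ℝ) * I ω)) atTop atBot :=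
        tendsto_neg_atTop_atBot.comp
          ((tendsto_natCast_atTop_atTop (R := ℝ)).atTop_mul_const hpos)
      have h2 : Tendsto (fun n : ℕ => Real.exp (-((n:ℝ) * I ω))) atTop (nhds 0) :=
        Real.tendsto_exp_atBot.comp h1
      simpa [neg_mul] using h2
  have hexp_le_one : ∀ (n : ℕ) (ω : Ω), Real.exp (-(n:ℝ) * I ω) ≤ 1 := by
    intro n ω
    apply Real.exp_le_one_iff.mpr
    have := hInn ω
    have hn : (0:ℝ) ≤ (n:ℝ) := Nat.cast_nonneg n
    nlinarith
  have hexp_meas : ∀ n : ℕ, Measurable fun ω => Real.exp (-(n:ℝ) * I ω) :=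
    fun n => (hImeas.const_mul (-(n:ℝ))).exp
  -- numerator
  have hnum : Tendsto (fun n : ℕ => ∫ ω, g (X T ω) * Real.exp (-(n:ℝ) * I ω) ∂ℙ) atTop
      (nhds (∫ ω in S, g (X T ω) ∂ℙ)) := by
    have key : Tendsto (fun n : ℕ => ∫ ω, g (X T ω) * Real.exp (-(n:ℝ) * I ω) ∂ℙ) atTop
        (nhds (∫ ω, S.indicator (fun ω => g (X T ω)) ω ∂ℙ)) := by
      apply tendsto_integral_of_dominated_convergence (bound := fun _ => Cg)
      · intro n
        exact ((hgm.comp (hXmeas T)).mul (hexp_meas n)).aestronglyMeasurable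
      · exact integrable_const Cg
      · intro n
        filter_upwards with ω
        rw [Real.norm_eq_abs, abs_mul, Real.abs_exp]
        calc |g (X T ω)| * Real.exp (-(n:ℝ) * I ω)
            ≤ Cg * 1 := mul_le_mul (hgb _) (hexp_le_one n ω) (Real.exp_pos _).le
              ((abs_nonneg (g (X T ω))).trans (hgb (X T ω)))
          _ = Cg := mul_one Cg
      · filter_upwards with ω
        have h := (hpt ω).const_mul (g (X T ω))
        convert h using 2
        by_cases hω : ω ∈ S
        · simp [Set.indicator_of_mem hω]
        · simp [Set.indicator_of_notMem hω]
    rwa [integral_indicator hSmeas] at key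
  -- denominator
  have hden : Tendsto (fun n : ℕ => ∫ ω, Real.exp (-(n:ℝ) * I ω) ∂ℙ) atTop
      (nhds ((ℙ S).toReal)) := by
    have key : Tendsto (fun n : ℕ => ∫ ω, Real.exp (-(n:ℝ) * I ω) ∂ℙ) atTop
        (nhds (∫ ω, S.indicator (1 : Ω → ℝ) ω ∂ℙ)) := by
      apply tendsto_integral_of_dominated_convergence (bound := fun _ => (1:ℝ))
      · intro n
        exact (hexp_meas n).aestronglyMeasurable
      · exact integrable_const 1
      · intro n
        filter_upwards with ω
        rw [Real.norm_eq_abs, Real.abs_exp]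
        exact hexp_le_one n ω
      · filter_upwards with ω
        exact hpt ω
    rwa [integral_indicator_one hSmeas] at key
  have hden_ne : (ℙ S).toReal ≠ 0 :=
    (ENNReal.toReal_pos hSpos.ne' (measure_ne_top ℙ S)).ne'
  simp only [hIeq]
  exact hnum.div hden hden_ne
end

section
/- Conversely, if (γ_t)_{0≤t≤T} is a flow of nonnegative finite measures solving ∂_t γ_t = ½ Δ γ_t − div(φ_t γ_t) − V γ_t with γ₀ a probability measure, 0 ≤ V ≤ 1 measurable, and γ_t(ℝ^d) > 0 for all t, then μ_t := γ_t / γ_t(ℝ^d) is a flow of probability measures solving ∂_t μ_t = ½ Δ μ_t − div(φ_t μ_t) − (V − ⟨μ_t,V⟩) μ_t in the sense of distributions, and γ_t(ℝ^d) = e^{−∫₀ᵗ ⟨μ_s,V⟩ ds}. -/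
open MeasureTheory Set
open scoped RealInnerProductSpace

/-- The Laplacian of `ψ : ℝ^d → ℝ`, as the trace of the second derivative. -/
noncomputable def lapl {d : ℕ} (ψ : EuclideanSpace ℝ (Fin d) → ℝ)
    (x : EuclideanSpace ℝ (Fin d)) : ℝ :=
  ∑ i : Fin d,
    iteratedFDeriv ℝ 2 ψ x ![EuclideanSpace.single i 1, EuclideanSpace.single i 1]

lemma lapl_const {d : ℕ} (c : ℝ) (x : EuclideanSpace ℝ (Fin d)) :
    lapl (fun _ => c) x = 0 := by
  unfold lapl
  rw [iteratedFDeriv_const_of_ne (by norm_num) c]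
  simp

lemma lapl_add_const {d : ℕ} (ψ : EuclideanSpace ℝ (Fin d) → ℝ) (hψ : ContDiff ℝ 2 ψ) (c : ℝ)
    (x : EuclideanSpace ℝ (Fin d)) : lapl (fun y => ψ y + c) x = lapl ψ x := by
  unfold lapl
  refine Finset.sum_congr rfl fun i _ => ?_
  rw [iteratedFDeriv_add_apply' hψ.contDiffAt contDiff_const.contDiffAt,
    iteratedFDeriv_const_of_ne (by norm_num) c]
  simp

lemma gradient_add_const {d : ℕ} (ψ : EuclideanSpace ℝ (Fin d) → ℝ) (c : ℝ)
    (x : EuclideanSpace ℝ (Fin d)) : gradient (fun y => ψ y + c) x = gradient ψ x := by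
  unfold gradient
  rw [fderiv_add_const]

/-- If `(γ_t)` is a flow of nonnegative finite measures solving, in the
distributional sense (tested against `C²` functions bounded together with their gradients
and Laplacians, which includes constants), the linear equation
`∂_t γ = ½Δγ − div(φ_t γ) − Vγ` with `γ₀` a probability measure, `0 ≤ V ≤ 1`, and
`γ_t(ℝ^d) > 0`, then `μ_t := γ_t / γ_t(ℝ^d)` is a flow of probability measures solving the
nonlinear (Gibbs) FPK equation `∂_t μ = ½Δμ − div(φ_t μ) − (V − ⟨μ_t,V⟩)μ`, and
`γ_t(ℝ^d) = e^{−∫₀ᵗ ⟨μ_s,V⟩ ds}`. -/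
theorem stmt_9 (d : ℕ) (T : ℝ) (hT : 0 ≤ T)
    (V : EuclideanSpace ℝ (Fin d) → ℝ) (hVm : Measurable V)
    (hV : ∀ x, V x ∈ Icc (0:ℝ) 1)
    (φ : ℝ → EuclideanSpace ℝ (Fin d) → EuclideanSpace ℝ (Fin d))
    (γ : ℝ → Measure (EuclideanSpace ℝ (Fin d)))
    (hγfin : ∀ t, IsFiniteMeasure (γ t))
    (hγ0 : IsProbabilityMeasure (γ 0))
    (hγpos : ∀ t ∈ Icc (0:ℝ) T, 0 < γ t univ)
    (hsol : ∀ ψ : EuclideanSpace ℝ (Fin d) → ℝ, ContDiff ℝ 2 ψ →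
      (∃ C, ∀ x, |ψ x| ≤ C ∧ ‖gradient ψ x‖ ≤ C ∧ |lapl ψ x| ≤ C) →
      ∀ t ∈ Icc (0:ℝ) T,
        HasDerivAt (fun s => ∫ x, ψ x ∂γ s)
          (∫ x, ((1/2) * lapl ψ x + ⟪φ t x, gradient ψ x⟫ - V x * ψ x) ∂γ t) t)
    (μ : ℝ → Measure (EuclideanSpace ℝ (Fin d)))
    (hμdef : ∀ t, μ t = (γ t univ)⁻¹ • γ t) :
    (∀ t ∈ Icc (0:ℝ) T, IsProbabilityMeasure (μ t)) ∧
    (∀ t ∈ Icc (0:ℝ) T,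
      (γ t univ).toReal = Real.exp (-∫ s in (0:ℝ)..t, ∫ y, V y ∂μ s)) ∧
    (∀ ψ : EuclideanSpace ℝ (Fin d) → ℝ, ContDiff ℝ 2 ψ →
      (∃ C, ∀ x, |ψ x| ≤ C ∧ ‖gradient ψ x‖ ≤ C ∧ |lapl ψ x| ≤ C) →
      ∀ t ∈ Icc (0:ℝ) T,
        HasDerivAt (fun s => ∫ x, ψ x ∂μ s)
          (∫ x, ((1/2) * lapl ψ x + ⟪φ t x, gradient ψ x⟫
            - (V x - ∫ y, V y ∂μ t) * ψ x) ∂μ t) t) := by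
  have hne : ∀ s, γ s univ ≠ ⊤ := fun s => (hγfin s).measure_univ_lt_top.ne
  have hMpos : ∀ t ∈ Icc (0:ℝ) T, 0 < (γ t univ).toReal :=
    fun t ht => ENNReal.toReal_pos (hγpos t ht).ne' (hne t)
  have hint : ∀ (s : ℝ) (f : EuclideanSpace ℝ (Fin d) → ℝ),
      ∫ x, f x ∂μ s = ((γ s univ).toReal)⁻¹ * ∫ x, f x ∂γ s := by
    intro s f
    rw [hμdef, integral_smul_measure, ENNReal.toReal_inv, smul_eq_mul]
  have hVint : ∀ s, Integrable V (γ s) := by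
    intro s
    exact (integrable_const (1:ℝ)).mono' hVm.aestronglyMeasurable
      (Filter.Eventually.of_forall fun x => by
        rw [Real.norm_eq_abs, abs_of_nonneg (hV x).1]; exact (hV x).2)
  have hMd : ∀ t ∈ Icc (0:ℝ) T,
      HasDerivAt (fun s => (γ s univ).toReal) (-∫ x, V x ∂γ t) t := by
    intro t ht
    have h := hsol (fun _ => (1:ℝ)) contDiff_const
      ⟨1, fun x => by
        refine ⟨by norm_num, ?_, ?_⟩
        · rw [gradient_fun_const]; simp
        · rw [lapl_const]; norm_num⟩ t ht
    have hfun : (fun s => ∫ x, (1:ℝ) ∂γ s) = fun s => (γ s univ).toReal := by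
      funext s; rw [integral_const, smul_eq_mul, mul_one, measureReal_def]
    have hval : (∫ x, ((1/2) * lapl (fun _ => (1:ℝ)) x
        + ⟪φ t x, gradient (fun _ => (1:ℝ)) x⟫ - V x * 1) ∂γ t) = -∫ x, V x ∂γ t := by
      rw [← integral_neg]
      refine integral_congr_ae (Filter.Eventually.of_forall fun x => ?_)
      simp [lapl_const, gradient_const]
    rw [hfun, hval] at h
    exact h
  have hprob : ∀ t ∈ Icc (0:ℝ) T, IsProbabilityMeasure (μ t) := by
    intro t ht
    refine ⟨?_⟩
    rw [hμdef, Measure.smul_apply, smul_eq_mul,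
      ENNReal.inv_mul_cancel (hγpos t ht).ne' (hne t)]
  have hVintμ : ∀ s ∈ Icc (0:ℝ) T, Integrable V (μ s) := by
    intro s hs
    rw [hμdef]
    refine (integrable_smul_measure ?_ ?_).mpr (hVint s)
    · simp [hne s]
    · simp [(hγpos s hs).ne']
  have haIcc : ∀ s ∈ Icc (0:ℝ) T, (∫ y, V y ∂μ s) ∈ Icc (0:ℝ) 1 := by
    intro s hs
    have : IsProbabilityMeasure (μ s) := hprob s hs
    constructor
    · exact integral_nonneg fun x => (hV x).1
    · calc ∫ y, V y ∂μ s ≤ ∫ _, (1:ℝ) ∂μ s :=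
            integral_mono (hVintμ s hs) (integrable_const 1) (fun x => (hV x).2)
        _ = 1 := by simp
  refine ⟨hprob, ?_, ?_⟩
  · -- exponential formula
    intro t ht
    have hsub : Icc (0:ℝ) t ⊆ Icc 0 T := Icc_subset_Icc le_rfl ht.2
    have hL : ∀ s ∈ Icc (0:ℝ) T,
        HasDerivAt (fun u => Real.log ((γ u univ).toReal)) (-∫ y, V y ∂μ s) s := by
      intro s hs
      have h := (hMd s hs).log (hMpos s hs).ne'
      have heq : (-∫ x, V x ∂γ s) / (γ s univ).toReal = -∫ y, V y ∂μ s := by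
        rw [hint s V, neg_div, div_eq_inv_mul]
      rwa [heq] at h
    have hInt : IntervalIntegrable (fun s => -∫ y, V y ∂μ s) volume 0 t := by
      rw [intervalIntegrable_iff_integrableOn_Icc_of_le ht.1]
      have hfin : IsFiniteMeasure (volume.restrict (Icc (0:ℝ) t)) := by
        constructor
        rw [Measure.restrict_apply_univ, Real.volume_Icc]
        exact ENNReal.ofReal_lt_top
      refine ⟨?_, ?_⟩
      · refine ((measurable_deriv (fun u => Real.log ((γ u univ).toReal))).aestronglyMeasurable.restrict).congr ?_
        refine (ae_restrict_iff' measurableSet_Icc).mpr (Filter.Eventually.of_forall fun s hs => ?_)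
        exact (hL s (hsub hs)).deriv
      · refine HasFiniteIntegral.of_bounded (C := 1) ?_
        refine (ae_restrict_iff' measurableSet_Icc).mpr (Filter.Eventually.of_forall fun s hs => ?_)
        rw [Real.norm_eq_abs, abs_neg, abs_of_nonneg (haIcc s (hsub hs)).1]
        exact (haIcc s (hsub hs)).2
    have heq := intervalIntegral.integral_eq_sub_of_hasDerivAt
      (f := fun u => Real.log ((γ u univ).toReal))
      (f' := fun s => -∫ y, V y ∂μ s)
      (fun s hs => hL s (hsub ((uIcc_of_le ht.1) ▸ hs))) hInt
    have hM0 : (γ 0 univ).toReal = 1 := by rw [hγ0.measure_univ, ENNReal.toReal_one]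
    simp only [hM0, Real.log_one, sub_zero] at heq
    have hneg : -∫ s in (0:ℝ)..t, ∫ y, V y ∂μ s = Real.log ((γ t univ).toReal) := by
      rw [← intervalIntegral.integral_neg]; exact heq
    rw [hneg, Real.exp_log (hMpos t ht)]
  · -- FPK equation for μ
    intro ψ hψ hC t ht
    obtain ⟨C, hCb⟩ := hC
    have hC0 : 0 ≤ C := (abs_nonneg (ψ 0)).trans (hCb 0).1
    have hψint : ∀ s, Integrable ψ (γ s) := fun s =>
      (integrable_const C).mono' hψ.continuous.aestronglyMeasurable
        (Filter.Eventually.of_forall fun x => by rw [Real.norm_eq_abs]; exact (hCb x).1)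
    have hF := hsol ψ hψ ⟨C, hCb⟩ t ht
    have hm := hMd t ht
    set A := ∫ x, ((1/2) * lapl ψ x + ⟪φ t x, gradient ψ x⟫ - V x * ψ x) ∂γ t with hA_def
    set B := ∫ x, V x ∂γ t with hB_def
    set Ft := ∫ x, ψ x ∂γ t with hFt_def
    set m := (γ t univ).toReal with hm_def
    set a := ∫ y, V y ∂μ t with ha_def
    have hm0 : m ≠ 0 := (hMpos t ht).ne'
    have ham : a = m⁻¹ * B := hint t V
    -- derivative of the shifted test function, giving `∫ (k - V) dγ = A - B`
    have hshift : (∫ x, (((1/2) * lapl ψ x + ⟪φ t x, gradient ψ x⟫ - V x * ψ x) - V x) ∂γ t)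
        = A + -B := by
      have h1 := hsol (fun y => ψ y + 1) (hψ.add contDiff_const)
        ⟨C + 1, fun x => by
          refine ⟨?_, ?_, ?_⟩
          · calc |ψ x + 1| ≤ |ψ x| + |1| := abs_add_le _ _
              _ ≤ C + 1 := by rw [abs_one]; linarith [(hCb x).1]
          · rw [gradient_add_const]; linarith [(hCb x).2.1]
          · rw [lapl_add_const ψ hψ]; linarith [(hCb x).2.2]⟩ t ht
      have hfun1 : (fun s => ∫ x, (ψ x + 1) ∂γ s)
          = fun s => (∫ x, ψ x ∂γ s) + (γ s univ).toReal := by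
        funext s
        rw [integral_add (hψint s) (integrable_const 1), integral_const, smul_eq_mul, mul_one, measureReal_def]
      have hval1 : (∫ x, ((1/2) * lapl (fun y => ψ y + 1) x
          + ⟪φ t x, gradient (fun y => ψ y + 1) x⟫ - V x * (ψ x + 1)) ∂γ t)
          = ∫ x, (((1/2) * lapl ψ x + ⟪φ t x, gradient ψ x⟫ - V x * ψ x) - V x) ∂γ t := by
        refine integral_congr_ae (Filter.Eventually.of_forall fun x => ?_)
        simp only [lapl_add_const ψ hψ, gradient_add_const]
        ring
      rw [hfun1, hval1] at h1
      exact h1.unique (hF.add hm)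
    have hkey : ∫ x, (((1/2) * lapl ψ x + ⟪φ t x, gradient ψ x⟫ - V x * ψ x) + a * ψ x) ∂γ t
        = A + a * Ft := by
      by_cases hk : Integrable
          (fun x => (1/2) * lapl ψ x + ⟪φ t x, gradient ψ x⟫ - V x * ψ x) (γ t)
      · rw [integral_add hk ((hψint t).const_mul a), integral_const_mul a, ← hA_def, ← hFt_def]
      · have hkV : ¬ Integrable
            (fun x => ((1/2) * lapl ψ x + ⟪φ t x, gradient ψ x⟫ - V x * ψ x) - V x) (γ t) := by
          intro h
          apply hk
          refine (h.add (hVint t)).congr (Filter.Eventually.of_forall fun x => ?_)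
          simp only [Pi.add_apply]
          ring
        have hA0 : A = 0 := by rw [hA_def]; exact integral_undef hk
        have hB0 : B = 0 := by
          have h0 : (0:ℝ) = A + -B := by rw [← hshift, integral_undef hkV]
          rw [hA0] at h0; linarith
        have ha0 : a = 0 := by rw [ham, hB0, mul_zero]
        rw [ha0, hA0]
        simp only [zero_mul, add_zero, zero_add]
        rw [hA_def] at *
        exact integral_undef hk
    have hfun : (fun s => ∫ x, ψ x ∂μ s) = fun s => (∫ x, ψ x ∂γ s) / (γ s univ).toReal := by
      funext s; rw [hint s ψ, inv_mul_eq_div]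
    rw [hfun]
    have hval : ∫ x, ((1/2) * lapl ψ x + ⟪φ t x, gradient ψ x⟫ - (V x - a) * ψ x) ∂μ t
        = (A * m - Ft * -B) / m ^ 2 := by
      rw [hint t _, ← hm_def]
      have hcong : ∫ x, ((1/2) * lapl ψ x + ⟪φ t x, gradient ψ x⟫ - (V x - a) * ψ x) ∂γ t
          = ∫ x, (((1/2) * lapl ψ x + ⟪φ t x, gradient ψ x⟫ - V x * ψ x) + a * ψ x) ∂γ t :=
        integral_congr_ae (Filter.Eventually.of_forall fun x => by ring)
      rw [hcong, hkey, ham]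
      field_simp
      ring
    rw [hval]
    exact hF.div hm hm0
end
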